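/- arXiv:1009.1347 — 2 statements merged into one kernel-verified Lean document; each statement's English description precedes it below -/
import Mathlib

section
/- In the setting of a finite-dimensional rational inner product space V with orthogonal maps w_0,…,w_m and reflections s_{j_1},…,s_{j_m} in nonzero vectors α_{j_1},…,α_{j_m}, set w^Δ := w_0 w_1 ⋯ w_m, β_{j_ℓ} := w_0 s_{j_1} w_1 ⋯ s_{j_{ℓ−1}} w_{ℓ−1}(α_{j_ℓ}), β^Δ_{j_ℓ} := w_0 w_1 ⋯ w_{ℓ−1}(α_{j_ℓ}), and u_ℓ := w_0 s_{j_1} w_1 ⋯ w_{ℓ−1}(s_{j_ℓ} − id)w_ℓ ⋯ w_m. Then for every γ ∈ V and every ℓ: u_ℓ(γ) = −⟨(β^Δ_{j_ℓ})∨, w^Δ(γ)⟩ · β_{j_ℓ}, where for a nonzero vector β we write β∨ = (2/⟨β,β⟩)β. -/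
open scoped RealInnerProductSpace

/-- `pref w s ℓ = w₀ s₁ w₁ ⋯ s_ℓ w_ℓ` (composition of endomorphisms). -/
def pref {V : Type*} [NormedAddCommGroup V] [InnerProductSpace ℝ V]
    (w s : ℕ → Module.End ℝ V) : ℕ → Module.End ℝ V
  | 0 => w 0
  | ℓ + 1 => pref w s ℓ * s (ℓ + 1) * w (ℓ + 1)

/-- `plainPref w ℓ = w₀ w₁ ⋯ w_ℓ`. -/
def plainPref {V : Type*} [NormedAddCommGroup V] [InnerProductSpace ℝ V]
    (w : ℕ → Module.End ℝ V) : ℕ → Module.End ℝ V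
  | 0 => w 0
  | ℓ + 1 => plainPref w ℓ * w (ℓ + 1)

/-- `suff w m ℓ = w_ℓ w_{ℓ+1} ⋯ w_m`. -/
def suff {V : Type*} [NormedAddCommGroup V] [InnerProductSpace ℝ V]
    (w : ℕ → Module.End ℝ V) (m ℓ : ℕ) : Module.End ℝ V :=
  ((List.range (m + 1 - ℓ)).map fun i => w (ℓ + i)).prod

/-- `uop w s m ℓ = w₀ s₁ w₁ ⋯ w_{ℓ-1} (s_ℓ - id) w_ℓ ⋯ w_m`. -/
def uop {V : Type*} [NormedAddCommGroup V] [InnerProductSpace ℝ V]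
    (w s : ℕ → Module.End ℝ V) (m ℓ : ℕ) : Module.End ℝ V :=
  pref w s (ℓ - 1) * (s ℓ - 1) * suff w m ℓ

/-- `vop w s m ℓ = w₀ s₁ w₁ ⋯ w_{ℓ-1} (s_ℓ + id) w_ℓ ⋯ w_m`. -/
def vop {V : Type*} [NormedAddCommGroup V] [InnerProductSpace ℝ V]
    (w s : ℕ → Module.End ℝ V) (m ℓ : ℕ) : Module.End ℝ V :=
  pref w s (ℓ - 1) * (s ℓ + 1) * suff w m ℓ

/-- `β_{j_ℓ} = w₀ s₁ w₁ ⋯ s_{ℓ-1} w_{ℓ-1} (α_{j_ℓ})`. -/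
def betaV {V : Type*} [NormedAddCommGroup V] [InnerProductSpace ℝ V]
    (w s : ℕ → Module.End ℝ V) (α : ℕ → V) (ℓ : ℕ) : V :=
  pref w s (ℓ - 1) (α ℓ)

/-- `β^Δ_{j_ℓ} = w₀ w₁ ⋯ w_{ℓ-1} (α_{j_ℓ})`. -/
def betaD {V : Type*} [NormedAddCommGroup V] [InnerProductSpace ℝ V]
    (w : ℕ → Module.End ℝ V) (α : ℕ → V) (ℓ : ℕ) : V :=
  plainPref w (ℓ - 1) (α ℓ)

/-- `⟨(β^Δ_{j_ℓ})∨, w^Δ(γ)⟩` where `β∨ = (2/⟨β,β⟩)β`. -/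
noncomputable def coeffc {V : Type*} [NormedAddCommGroup V] [InnerProductSpace ℝ V]
    (w s : ℕ → Module.End ℝ V) (α : ℕ → V) (m : ℕ) (γ : V) (ℓ : ℕ) : ℝ :=
  (2 / ⟪betaD w α ℓ, betaD w α ℓ⟫) * ⟪betaD w α ℓ, plainPref w m γ⟫


lemma plainPref_isom {V : Type*} [NormedAddCommGroup V] [InnerProductSpace ℝ V]
    (w : ℕ → Module.End ℝ V)
    (hw : ∀ i (x y : V), ⟪w i x, w i y⟫ = ⟪x, y⟫) :
    ∀ k (x y : V), ⟪plainPref w k x, plainPref w k y⟫ = ⟪x, y⟫ := by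
  intro k
  induction k with
  | zero => exact hw 0
  | succ n ih =>
    intro x y
    simp only [plainPref, Module.End.mul_apply]
    rw [ih, hw]

lemma suff_succ_top {V : Type*} [NormedAddCommGroup V] [InnerProductSpace ℝ V]
    (w : ℕ → Module.End ℝ V) (m ℓ : ℕ) (h : ℓ ≤ m + 1) :
    suff w (m+1) ℓ = suff w m ℓ * w (m+1) := by
  unfold suff
  rw [show m + 1 + 1 - ℓ = (m + 1 - ℓ) + 1 from by omega, List.range_succ,
    List.map_append, List.prod_append]
  simp [show ℓ + (m + 1 - ℓ) = m + 1 from by omega]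

lemma plainPref_mul_suff {V : Type*} [NormedAddCommGroup V] [InnerProductSpace ℝ V]
    (w : ℕ → Module.End ℝ V) :
    ∀ m k, k ≤ m → plainPref w m = plainPref w k * suff w m (k+1) := by
  intro m
  induction m with
  | zero =>
    intro k hk
    interval_cases k
    simp [suff, plainPref]
  | succ n ih =>
    intro k hk
    rcases Nat.lt_or_ge k (n+1) with h | h
    · rw [show plainPref w (n+1) = plainPref w n * w (n+1) from rfl, ih k (by omega),
        suff_succ_top w n (k+1) (by omega), mul_assoc]
    · have : k = n + 1 := by omega
      subst this
      simp [suff]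

theorem u_ell_apply
    {V : Type*} [NormedAddCommGroup V] [InnerProductSpace ℝ V] [FiniteDimensional ℝ V]
    (m : ℕ) (w s : ℕ → Module.End ℝ V) (α : ℕ → V)
    (hα : ∀ ℓ, α ℓ ≠ 0)
    (hw : ∀ i (x y : V), ⟪w i x, w i y⟫ = ⟪x, y⟫)
    (hs : ∀ ℓ (v : V), s ℓ v = v - ((2 * ⟪α ℓ, v⟫) / ⟪α ℓ, α ℓ⟫) • α ℓ) :
    ∀ (γ : V) (ℓ : ℕ), 1 ≤ ℓ → ℓ ≤ m →
      uop w s m ℓ γ = -(coeffc w s α m γ ℓ) • betaV w s α ℓ := by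
  intro γ ℓ h1 hm
  obtain ⟨k, rfl⟩ : ∃ k, ℓ = k + 1 := ⟨ℓ - 1, by omega⟩
  have hsplit := plainPref_mul_suff w m k (by omega)
  set v := suff w m (k+1) γ with hv
  have hplain : plainPref w m γ = plainPref w k v := by
    rw [hsplit]; rfl
  have hco : coeffc w s α m γ (k+1) =
      2 * ⟪α (k+1), v⟫ / ⟪α (k+1), α (k+1)⟫ := by
    unfold coeffc betaD
    simp only [Nat.add_sub_cancel, hplain, plainPref_isom w hw]
    ring
  have hstep : (s (k+1) - 1) v
      = (-(2 * ⟪α (k+1), v⟫ / ⟪α (k+1), α (k+1)⟫)) • α (k+1) := by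
    simp only [LinearMap.sub_apply, Module.End.one_apply, hs, neg_smul]
    abel
  show uop w s m (k+1) γ = _
  unfold uop betaV
  simp only [Nat.add_sub_cancel, Module.End.mul_apply]
  rw [hstep, map_smul, hco]
end

section
/- With V, orthogonal maps w_0,…,w_m, reflections s_{j_1},…,s_{j_m} in nonzero α_{j_ℓ}, and with w := w_0 s_{j_1} w_1 ⋯ s_{j_m} w_m, w^Δ := w_0 w_1 ⋯ w_m, β_{j_ℓ} := w_0 s_{j_1} ⋯ w_{ℓ−1}(α_{j_ℓ}), β^Δ_{j_ℓ} := w_0 w_1 ⋯ w_{ℓ−1}(α_{j_ℓ}): for all 1 ≤ ℓ ≤ m and γ ∈ V, ⟨(w + w^Δ)(γ), β_{j_ℓ}⟩ = Σ_{h≠ℓ} (−1)^{χ(h>ℓ)} ⟨β_{j_h}, β_{j_ℓ}⟩ · ⟨(β^Δ_{j_h})∨, w^Δ(γ)⟩, where χ(h>ℓ) is 1 if h>ℓ and 0 otherwise, and β∨ = (2/⟨β,β⟩)β. -/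
open scoped RealInnerProductSpace

section Helpers
variable {V : Type*} [NormedAddCommGroup V] [InnerProductSpace ℝ V]

lemma suff_top (w : ℕ → Module.End ℝ V) (m : ℕ) : suff w m (m + 1) = 1 := by
  simp [suff]

lemma suff_eq (w : ℕ → Module.End ℝ V) {m ℓ : ℕ} (h : ℓ ≤ m) :
    suff w m ℓ = w ℓ * suff w m (ℓ + 1) := by
  unfold suff
  rw [show m + 1 - ℓ = (m + 1 - (ℓ+1)) + 1 by omega, List.range_succ_eq_map,
    List.map_cons, List.prod_cons, List.map_map]
  congr 1
  exact congrArg List.prod (List.map_congr_left fun i _ => by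
    simp only [Function.comp_apply]; congr 1; omega)

lemma plainPref_add (w : ℕ → Module.End ℝ V) (j n : ℕ) :
    plainPref w (j + n) = plainPref w j *
      ((List.range n).map fun i => w (j + 1 + i)).prod := by
  induction n with
  | zero => simp
  | succ n ih =>
      rw [show j + (n + 1) = (j + n) + 1 by omega, plainPref, ih, List.range_succ]
      simp only [List.map_append, List.prod_append, List.map_cons, List.prod_cons,
        List.map_nil, List.prod_nil, mul_one, mul_assoc]
      congr 3
      omega

lemma plainPref_factor (w : ℕ → Module.End ℝ V) {m ℓ : ℕ} (h1 : 1 ≤ ℓ) (h2 : ℓ ≤ m + 1) :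
    plainPref w m = plainPref w (ℓ - 1) * suff w m ℓ := by
  have key := plainPref_add w (ℓ - 1) (m + 1 - ℓ)
  rw [show ℓ - 1 + (m + 1 - ℓ) = m by omega] at key
  rw [key]
  unfold suff
  exact congrArg _ (congrArg List.prod (List.map_congr_left fun i _ => by
    congr 1; omega))

end Helpers

section InnerHelpers
variable {V : Type*} [NormedAddCommGroup V] [InnerProductSpace ℝ V]
variable {w s : ℕ → Module.End ℝ V} {α : ℕ → V}

lemma s_inner (hα : ∀ ℓ, α ℓ ≠ 0)
    (hs : ∀ ℓ (v : V), s ℓ v = v - ((2 * ⟪α ℓ, v⟫) / ⟪α ℓ, α ℓ⟫) • α ℓ) :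
    ∀ ℓ (x y : V), ⟪s ℓ x, s ℓ y⟫ = ⟪x, y⟫ := by
  intro ℓ x y
  have ha : ⟪α ℓ, α ℓ⟫ ≠ (0:ℝ) := by
    simpa using (inner_self_ne_zero (𝕜 := ℝ)).2 (hα ℓ)
  rw [hs, hs]
  simp only [inner_sub_left, inner_sub_right, real_inner_smul_left, real_inner_smul_right]
  rw [real_inner_comm x (α ℓ)]
  field_simp
  ring

lemma pref_inner (hα : ∀ ℓ, α ℓ ≠ 0)
    (hw : ∀ i (x y : V), ⟪w i x, w i y⟫ = ⟪x, y⟫)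
    (hs : ∀ ℓ (v : V), s ℓ v = v - ((2 * ⟪α ℓ, v⟫) / ⟪α ℓ, α ℓ⟫) • α ℓ) :
    ∀ ℓ (x y : V), ⟪pref w s ℓ x, pref w s ℓ y⟫ = ⟪x, y⟫ := by
  intro ℓ
  induction ℓ with
  | zero => exact hw 0
  | succ ℓ ih =>
      intro x y
      simp only [pref, Module.End.mul_apply]
      rw [ih, s_inner hα hs, hw]

lemma plainPref_inner (hw : ∀ i (x y : V), ⟪w i x, w i y⟫ = ⟪x, y⟫) :
    ∀ ℓ (x y : V), ⟪plainPref w ℓ x, plainPref w ℓ y⟫ = ⟪x, y⟫ := by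
  intro ℓ
  induction ℓ with
  | zero => exact hw 0
  | succ ℓ ih =>
      intro x y
      simp only [plainPref, Module.End.mul_apply]
      rw [ih, hw]

lemma coeffc_eq (hw : ∀ i (x y : V), ⟪w i x, w i y⟫ = ⟪x, y⟫)
    {m h : ℕ} (h1 : 1 ≤ h) (h2 : h ≤ m) (γ : V) :
    coeffc w s α m γ h = 2 * ⟪α h, suff w m h γ⟫ / ⟪α h, α h⟫ := by
  unfold coeffc betaD
  have hfac : plainPref w m γ = plainPref w (h - 1) (suff w m h γ) := by
    rw [plainPref_factor w h1 (show h ≤ m + 1 by omega), Module.End.mul_apply]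
  rw [hfac, plainPref_inner hw, plainPref_inner hw]
  ring

lemma uop_apply (hs : ∀ ℓ (v : V), s ℓ v = v - ((2 * ⟪α ℓ, v⟫) / ⟪α ℓ, α ℓ⟫) • α ℓ)
    {m h : ℕ} (γ : V) :
    uop w s m h γ = -((2 * ⟪α h, suff w m h γ⟫ / ⟪α h, α h⟫) • betaV w s α h) := by
  unfold uop betaV
  simp only [Module.End.mul_apply, LinearMap.sub_apply, Module.End.one_apply]
  rw [hs, sub_sub_cancel_left, map_neg, map_smul]

end InnerHelpers

lemma telescope {V : Type*} [NormedAddCommGroup V] [InnerProductSpace ℝ V]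
    (w s : ℕ → Module.End ℝ V) (m : ℕ) :
    ∀ ℓ, 1 ≤ ℓ → ℓ ≤ m + 1 →
    pref w s (ℓ - 1) * suff w m ℓ =
      plainPref w m + ∑ h ∈ Finset.Icc 1 (ℓ - 1), uop w s m h := by
  intro ℓ
  induction ℓ with
  | zero => omega
  | succ ℓ ih =>
    intro _ hle
    rcases Nat.eq_zero_or_pos ℓ with h0 | hpos
    · subst h0
      rw [show (1:ℕ) - 1 = 0 from rfl, Finset.Icc_eq_empty (by omega), Finset.sum_empty,
        add_zero, plainPref_factor w le_rfl (by omega)]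
      rfl
    · have hlm : ℓ ≤ m := by omega
      have hih := ih hpos (by omega)
      have hp : pref w s ℓ = pref w s (ℓ - 1) * s ℓ * w ℓ := by
        conv_lhs => rw [show ℓ = (ℓ - 1) + 1 by omega]
        rw [pref, show ℓ - 1 + 1 = ℓ by omega]
      have hsum : ∑ h ∈ Finset.Icc 1 ℓ, uop w s m h
          = ∑ h ∈ Finset.Icc 1 (ℓ - 1), uop w s m h + uop w s m ℓ := by
        conv_lhs => rw [show ℓ = (ℓ - 1) + 1 by omega]
        rw [Finset.sum_Icc_succ_top (by omega), show ℓ - 1 + 1 = ℓ by omega]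
      simp only [Nat.add_sub_cancel]
      rw [hp, hsum, mul_assoc, mul_assoc, ← suff_eq w hlm, ← mul_assoc]
      have hkey : pref w s (ℓ - 1) * s ℓ * suff w m ℓ
          = uop w s m ℓ + pref w s (ℓ - 1) * suff w m ℓ := by
        unfold uop; noncomm_ring
      rw [hkey, hih]; abel

theorem inner_w_plus_wDelta_with_beta
    {V : Type*} [NormedAddCommGroup V] [InnerProductSpace ℝ V] [FiniteDimensional ℝ V]
    (m : ℕ) (w s : ℕ → Module.End ℝ V) (α : ℕ → V)
    (hα : ∀ ℓ, α ℓ ≠ 0)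
    (hw : ∀ i (x y : V), ⟪w i x, w i y⟫ = ⟪x, y⟫)
    (hs : ∀ ℓ (v : V), s ℓ v = v - ((2 * ⟪α ℓ, v⟫) / ⟪α ℓ, α ℓ⟫) • α ℓ) :
    ∀ (γ : V) (ℓ : ℕ), 1 ≤ ℓ → ℓ ≤ m →
      ⟪(pref w s m + plainPref w m) γ, betaV w s α ℓ⟫ =
        ∑ h ∈ Finset.Icc 1 m \ {ℓ},
          (-1 : ℝ) ^ (if ℓ < h then 1 else 0) * ⟪betaV w s α h, betaV w s α ℓ⟫ *
            coeffc w s α m γ h := by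
  intro γ ℓ hℓ1 hℓm
  have ha : ⟪α ℓ, α ℓ⟫ ≠ (0:ℝ) := by
    simpa using (inner_self_ne_zero (𝕜 := ℝ)).2 (hα ℓ)
  set f : ℕ → ℝ := fun h => coeffc w s α m γ h * ⟪betaV w s α h, betaV w s α ℓ⟫ with hf
  have key_uop : ∀ h ∈ Finset.Icc 1 m,
      ⟪uop w s m h γ, betaV w s α ℓ⟫ = -f h := by
    intro h hh
    simp only [Finset.mem_Icc] at hh
    rw [uop_apply hs, inner_neg_left, real_inner_smul_left,
      ← coeffc_eq hw hh.1 hh.2]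
  have E1 : ⟪pref w s m γ, betaV w s α ℓ⟫
      = ⟪plainPref w m γ, betaV w s α ℓ⟫ - ∑ h ∈ Finset.Icc 1 m, f h := by
    have ht := telescope w s m (m + 1) (by omega) (by omega)
    rw [Nat.add_sub_cancel, suff_top, mul_one] at ht
    rw [ht, LinearMap.add_apply, LinearMap.sum_apply, inner_add_left, sum_inner,
      Finset.sum_congr rfl key_uop, Finset.sum_neg_distrib]
    ring
  have E2 : ⟪plainPref w m γ, betaV w s α ℓ⟫
      = (1/2) * f ℓ + ∑ h ∈ Finset.Icc 1 (ℓ - 1), f h := by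
    have ht := telescope w s m ℓ hℓ1 (by omega)
    have happ : pref w s (ℓ - 1) (suff w m ℓ γ)
        = plainPref w m γ + ∑ h ∈ Finset.Icc 1 (ℓ - 1), uop w s m h γ := by
      conv_lhs => rw [← Module.End.mul_apply, ht]
      simp [LinearMap.add_apply, LinearMap.sum_apply]
    have hleft : ⟪pref w s (ℓ - 1) (suff w m ℓ γ), betaV w s α ℓ⟫ = (1/2) * f ℓ := by
      simp only [hf]
      unfold betaV
      rw [pref_inner hα hw hs, coeffc_eq hw hℓ1 hℓm, pref_inner hα hw hs,
        real_inner_comm (suff w m ℓ γ) (α ℓ)]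
      field_simp
    have hcomb : ⟪pref w s (ℓ - 1) (suff w m ℓ γ), betaV w s α ℓ⟫
        = ⟪plainPref w m γ, betaV w s α ℓ⟫ + ∑ h ∈ Finset.Icc 1 (ℓ - 1), (-(f h)) := by
      rw [happ, inner_add_left, sum_inner]
      congr 1
      refine Finset.sum_congr rfl fun h hh => ?_
      exact key_uop h (by simp only [Finset.mem_Icc] at hh ⊢; omega)
    rw [hleft, Finset.sum_neg_distrib] at hcomb
    linarith
  have hdisj : Disjoint (Finset.Icc 1 (ℓ - 1)) (Finset.Icc (ℓ + 1) m) := by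
    rw [Finset.disjoint_left]
    intro x hx hx'
    simp only [Finset.mem_Icc] at hx hx'
    omega
  have hsdiff : Finset.Icc 1 m \ {ℓ} = Finset.Icc 1 (ℓ - 1) ∪ Finset.Icc (ℓ + 1) m := by
    ext x
    simp only [Finset.mem_sdiff, Finset.mem_Icc, Finset.mem_union, Finset.mem_singleton]
    omega
  have hmem : ℓ ∈ Finset.Icc 1 m := by simp only [Finset.mem_Icc]; omega
  have hsumm : ∑ h ∈ Finset.Icc 1 m, f h
      = ∑ h ∈ Finset.Icc 1 (ℓ - 1), f h + f ℓ + ∑ h ∈ Finset.Icc (ℓ + 1) m, f h := by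
    rw [← Finset.add_sum_erase _ f hmem, ← Finset.sdiff_singleton_eq_erase, hsdiff,
      Finset.sum_union hdisj]
    ring
  have hrhs : ∑ h ∈ Finset.Icc 1 m \ {ℓ},
        (-1 : ℝ) ^ (if ℓ < h then 1 else 0) * ⟪betaV w s α h, betaV w s α ℓ⟫ *
          coeffc w s α m γ h
      = ∑ h ∈ Finset.Icc 1 (ℓ - 1), f h - ∑ h ∈ Finset.Icc (ℓ + 1) m, f h := by
    rw [hsdiff, Finset.sum_union hdisj]
    congr 1
    · refine Finset.sum_congr rfl fun h hh => ?_
      simp only [Finset.mem_Icc] at hh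
      rw [if_neg (by omega), pow_zero, one_mul, hf]
      ring
    · rw [← Finset.sum_neg_distrib]
      refine Finset.sum_congr rfl fun h hh => ?_
      simp only [Finset.mem_Icc] at hh
      rw [if_pos (by omega), pow_one, hf]
      ring
  rw [LinearMap.add_apply, inner_add_left, E1, E2, hrhs, hsumm]
  ring
end
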